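/- Assume α = 0. For every p ≥ 1 and every i ∈ {1, …, 2n} \ {3}: (R^p·ω)(e_1, e_2, …, e_1, e_2, e_2, e_i), with p leading pairs (e_1, e_2) followed by e_2, e_i, equals (−1)^p ε^p p! ω(e_2, e_i). -/

import Mathlib

noncomputable section

/-- Gauss-equation curvature `R(X,Y)Z = h(Y,Z)·S(X) − h(X,Z)·S(Y)`. -/
def RR {V : Type*} [AddCommGroup V] [Module ℝ V]
    (h : V →ₗ[ℝ] V →ₗ[ℝ] ℝ) (S : V →ₗ[ℝ] V) (X Y Z : V) : V :=
  h Y Z • S X - h X Z • S Y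

/-- One application of the curvature action on an `m`-linear form (encoded as a
function on lists of vectors): `(R·T)(X,Y,Z₁,…,Zₘ) = −∑ᵢ T(Z₁,…,R(X,Y)Zᵢ,…,Zₘ)`;
the two newest (leftmost) arguments are consumed. -/
def RAct {V : Type*} [AddCommGroup V] [Module ℝ V]
    (h : V →ₗ[ℝ] V →ₗ[ℝ] ℝ) (S : V →ₗ[ℝ] V) (T : List V → ℝ) : List V → ℝ
  | X :: Y :: Zs =>
      -∑ i ∈ Finset.range Zs.length, T (Zs.set i (RR h S X Y (Zs.getD i 0)))
  | _ => 0

/-- `R^p · ω`, as a function on lists of vectors (of length `2p+2`):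
`R⁰·ω = ω` and `R^p·ω = R·(R^{p−1}·ω)`. -/
def Rpow {V : Type*} [AddCommGroup V] [Module ℝ V]
    (h : V →ₗ[ℝ] V →ₗ[ℝ] ℝ) (S : V →ₗ[ℝ] V) (ω : V →ₗ[ℝ] V →ₗ[ℝ] ℝ) (p : ℕ) :
    List V → ℝ :=
  (RAct h S)^[p] (fun l => ω (l.getD 0 0) (l.getD 1 0))

/-- The list `X, Y, X, Y, …` with `p` pairs `(X, Y)`. -/
def pairList {V : Type*} (X Y : V) : ℕ → List V
  | 0 => []
  | p + 1 => X :: Y :: pairList X Y p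

/-- The list `f 1, y, f 2, y, …, f p, y`. -/
def interleave {V : Type*} (f : ℕ → V) (y : V) : ℕ → List V
  | 0 => []
  | p + 1 => interleave f y p ++ [f (p + 1), y]

set_option linter.unusedSectionVars false

section Aux
variable {V : Type*} [AddCommGroup V] [Module ℝ V]
  (h : V →ₗ[ℝ] V →ₗ[ℝ] ℝ) (S : V →ₗ[ℝ] V) (ω : V →ₗ[ℝ] V →ₗ[ℝ] ℝ)

lemma getD_set_self' (l : List V) (k : ℕ) (a : V) (hk : k < l.length) :
    (l.set k a).getD k 0 = a := by
  simp [List.getD_eq_getElem?_getD, List.getElem?_set, hk]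

lemma getD_set_ne' (l : List V) (k j : ℕ) (a : V) (hj : j ≠ k) :
    (l.set k a).getD j 0 = l.getD j 0 := by
  simp [List.getD_eq_getElem?_getD, List.getElem?_set, (Ne.symm hj : k ≠ j)]

lemma set_getD_self' (l : List V) (k : ℕ) :
    l.set k (l.getD k 0) = l := by
  apply List.ext_getElem (by simp)
  intro n h1 h2
  rw [List.getElem_set]
  split
  · subst ‹k = n›; rw [List.getD_eq_getElem _ _ h2]
  · rfl

lemma RR_zero_left (Y Z : V) : RR h S 0 Y Z = 0 := by simp [RR]
lemma RR_zero_mid (X Z : V) : RR h S X 0 Z = 0 := by simp [RR]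
lemma RR_zero_right (X Y : V) : RR h S X Y 0 = 0 := by simp [RR]

lemma RR_smul_left (c : ℝ) (X Y Z : V) : RR h S (c • X) Y Z = c • RR h S X Y Z := by
  simp only [RR, map_smul, LinearMap.smul_apply, smul_eq_mul, smul_sub, smul_smul]
  try module

lemma RR_smul_mid (c : ℝ) (X Y Z : V) : RR h S X (c • Y) Z = c • RR h S X Y Z := by
  simp only [RR, map_smul, LinearMap.smul_apply, smul_eq_mul, smul_sub, smul_smul]
  try module

lemma RR_smul_right (c : ℝ) (X Y Z : V) : RR h S X Y (c • Z) = c • RR h S X Y Z := by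
  simp only [RR, map_smul, smul_eq_mul, smul_sub, smul_smul]
  try module

lemma Rpow_succ (p : ℕ) (l : List V) :
    Rpow h S ω (p + 1) l = RAct h S (Rpow h S ω p) l := by
  simp [Rpow, Function.iterate_succ_apply']

lemma RAct_cons (T : List V → ℝ) (X Y : V) (Zs : List V) :
    RAct h S T (X :: Y :: Zs)
      = -∑ i ∈ Finset.range Zs.length, T (Zs.set i (RR h S X Y (Zs.getD i 0))) := rfl

lemma Rpow_zero_apply (l : List V) :
    Rpow h S ω 0 l = ω (l.getD 0 0) (l.getD 1 0) := rfl

lemma Rpow_set_zero : ∀ (p : ℕ) (l : List V), l.length = 2 * p + 2 →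
    ∀ k, k < l.length → Rpow h S ω p (l.set k (0 : V)) = 0 := by
  intro p
  induction p with
  | zero =>
    intro l hl k hk
    rw [hl] at hk
    rw [Rpow_zero_apply]
    interval_cases k
    · rw [getD_set_self' _ _ _ (by omega)]; simp
    · rw [getD_set_self' _ _ _ (by omega)]; simp
  | succ p IH =>
    intro l hl k hk
    rcases l with _ | ⟨X, _ | ⟨Y, Zs⟩⟩ <;> simp only [List.length] at hl
    · omega
    · omega
    have hZs : Zs.length = 2 * p + 2 := by omega
    match k with
    | 0 =>
      simp only [List.set]
      rw [Rpow_succ, RAct_cons, neg_eq_zero]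
      apply Finset.sum_eq_zero
      intro j hj
      rw [RR_zero_left]
      exact IH Zs hZs j (by simpa using hj)
    | 1 =>
      simp only [List.set]
      rw [Rpow_succ, RAct_cons, neg_eq_zero]
      apply Finset.sum_eq_zero
      intro j hj
      rw [RR_zero_mid]
      exact IH Zs hZs j (by simpa using hj)
    | (j + 2) =>
      simp only [List.set]
      have hjlen : j < Zs.length := by simp at hk; omega
      rw [Rpow_succ, RAct_cons, neg_eq_zero, List.length_set]
      apply Finset.sum_eq_zero
      intro m hm
      have hmlen : m < Zs.length := by simpa using hm
      by_cases hmj : m = j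
      · subst hmj
        rw [getD_set_self' _ _ _ hmlen, RR_zero_right, List.set_set]
        exact IH Zs hZs m hmlen
      · rw [getD_set_ne' _ _ _ _ hmj, List.set_comm _ _ (Ne.symm hmj)]
        exact IH (Zs.set m _) (by simpa using hZs) j (by simpa using hjlen)

lemma Rpow_set_smul : ∀ (p : ℕ) (l : List V), l.length = 2 * p + 2 →
    ∀ k, k < l.length → ∀ (c : ℝ) (v : V),
    Rpow h S ω p (l.set k (c • v)) = c * Rpow h S ω p (l.set k v) := by
  intro p
  induction p with
  | zero =>
    intro l hl k hk c v
    rw [hl] at hk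
    rw [Rpow_zero_apply, Rpow_zero_apply]
    interval_cases k
    · rw [getD_set_self' _ _ _ (by omega), getD_set_self' _ _ _ (by omega),
        getD_set_ne' _ _ _ _ (by omega), getD_set_ne' _ _ _ _ (by omega)]
      simp
    · rw [getD_set_self' _ _ _ (by omega), getD_set_self' _ _ _ (by omega),
        getD_set_ne' _ _ _ _ (by omega), getD_set_ne' _ _ _ _ (by omega)]
      simp
  | succ p IH =>
    intro l hl k hk c v
    rcases l with _ | ⟨X, _ | ⟨Y, Zs⟩⟩ <;> simp only [List.length] at hl
    · omega
    · omega
    have hZs : Zs.length = 2 * p + 2 := by omega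
    match k with
    | 0 =>
      simp only [List.set]
      rw [Rpow_succ, RAct_cons, Rpow_succ, RAct_cons, mul_neg, neg_inj, Finset.mul_sum]
      apply Finset.sum_congr rfl
      intro j hj
      rw [RR_smul_left]
      exact IH Zs hZs j (by simpa using hj) c _
    | 1 =>
      simp only [List.set]
      rw [Rpow_succ, RAct_cons, Rpow_succ, RAct_cons, mul_neg, neg_inj, Finset.mul_sum]
      apply Finset.sum_congr rfl
      intro j hj
      rw [RR_smul_mid]
      exact IH Zs hZs j (by simpa using hj) c _
    | (j + 2) =>
      simp only [List.set]
      have hjlen : j < Zs.length := by simp at hk; omega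
      rw [Rpow_succ, RAct_cons, Rpow_succ, RAct_cons, List.length_set, List.length_set,
        mul_neg, neg_inj, Finset.mul_sum]
      apply Finset.sum_congr rfl
      intro m hm
      have hmlen : m < Zs.length := by simpa using hm
      by_cases hmj : m = j
      · subst hmj
        rw [getD_set_self' _ _ _ hmlen, getD_set_self' _ _ _ hmlen,
          List.set_set, List.set_set, RR_smul_right]
        exact IH Zs hZs m hmlen c _
      · rw [getD_set_ne' _ _ _ _ hmj, getD_set_ne' _ _ _ _ hmj,
          List.set_comm _ _ (Ne.symm hmj), List.set_comm v _ (Ne.symm hmj)]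
        exact IH (Zs.set m _) (by simpa using hZs) j (by simpa using hjlen) c v

lemma pairList_length (X Y : V) : ∀ p, (pairList X Y p).length = 2 * p := by
  intro p
  induction p with
  | zero => simp [pairList]
  | succ p IH => simp [pairList, IH]; omega

lemma pairList_getD (X Y : V) : ∀ p k, k < 2 * p →
    (pairList X Y p).getD k 0 = if k % 2 = 0 then X else Y := by
  intro p
  induction p with
  | zero => intro k hk; omega
  | succ p IH =>
    intro k hk
    match k with
    | 0 => simp [pairList]
    | 1 => simp [pairList]
    | (m + 2) =>
      have h2 : (m + 2) % 2 = m % 2 := by omega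
      rw [h2]
      simpa [pairList] using IH m (by omega)

lemma sum_if_odd (v : ℝ) : ∀ p : ℕ,
    ∑ k ∈ Finset.range (2 * p), (if k % 2 = 1 then v else 0) = p * v := by
  intro p
  induction p with
  | zero => simp
  | succ p IH =>
    have h2 : 2 * (p + 1) = (2 * p + 1) + 1 := by ring
    rw [h2, Finset.sum_range_succ, Finset.sum_range_succ, IH,
      if_neg (by omega), if_pos (by omega)]
    push_cast
    ring

end Aux

theorem stmt13
    {V : Type*} [AddCommGroup V] [Module ℝ V]
    (n : ℕ) (hn : 2 ≤ n) (e : ℕ → V)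
    (hbasis : ∃ b : Module.Basis (Fin (2 * n)) ℝ V, ∀ i : Fin (2 * n), b i = e (i.1 + 1))
    (h ω : V →ₗ[ℝ] V →ₗ[ℝ] ℝ)
    (hsymm : ∀ X Y, h X Y = h Y X)
    (halt : ∀ X, ω X X = 0)
    (S : V →ₗ[ℝ] V)
    (α ε : ℝ) (hε : ε = 1 ∨ ε = -1)
    (hS1 : S (e 1) = α • e 1 + e 2)
    (hS2 : S (e 2) = α • e 2 + e 3)
    (hS3 : S (e 3) = α • e 3)
    (hh13 : h (e 1) (e 3) = ε) (hh31 : h (e 3) (e 1) = ε) (hh22 : h (e 2) (e 2) = ε)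
    (hh0 : ∀ i j, 1 ≤ i → i ≤ 2 * n → 1 ≤ j → j ≤ 2 * n → min i j ≤ 3 →
      ¬((i = 1 ∧ j = 3) ∨ (i = 3 ∧ j = 1) ∨ (i = 2 ∧ j = 2)) → h (e i) (e j) = 0)
    (hα : α = 0)
    (p : ℕ) (hp : 1 ≤ p)
    (i : ℕ) (hi1 : 1 ≤ i) (hi : i ≤ 2 * n) (hi3 : i ≠ 3) :
    Rpow h S ω p (pairList (e 1) (e 2) p ++ [e 2, e i]) =
      (-1) ^ p * ε ^ p * (Nat.factorial p : ℝ) * ω (e 2) (e i) := by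
  subst hα
  simp only [zero_smul, zero_add] at hS1 hS2 hS3
  have hA : h (e 2) (e 1) = 0 :=
    hh0 2 1 (by omega) (by omega) (by omega) (by omega) (by omega) (by omega)
  have hB : h (e 1) (e 1) = 0 :=
    hh0 1 1 (by omega) (by omega) (by omega) (by omega) (by omega) (by omega)
  have hC : h (e 1) (e 2) = 0 :=
    hh0 1 2 (by omega) (by omega) (by omega) (by omega) (by omega) (by omega)
  have hD : h (e 1) (e i) = 0 :=
    hh0 1 i (by omega) (by omega) hi1 hi (by omega) (by omega)
  have hE : i ≠ 2 → h (e 2) (e i) = 0 := fun hi2 =>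
    hh0 2 i (by omega) (by omega) hi1 hi (by omega) (by omega)
  have hR1 : RR h S (e 1) (e 2) (e 1) = 0 := by rw [RR, hA, hB]; simp
  have hR2 : RR h S (e 1) (e 2) (e 2) = ε • e 2 := by rw [RR, hh22, hC, hS1]; simp
  have hRi : RR h S (e 1) (e 2) (e i) = h (e 2) (e i) • e 2 := by rw [RR, hD, hS1]; simp
  clear hp
  induction p with
  | zero => simp [pairList, Rpow_zero_apply, Nat.factorial]
  | succ p IH =>
    set L := pairList (e 1) (e 2) p ++ [e 2, e i] with hLdef
    have hLlen : L.length = 2 * p + 2 := by simp [hLdef, pairList_length]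
    have hgetL : ∀ k, k < 2 * p → L.getD k 0 = if k % 2 = 0 then e 1 else e 2 := by
      intro k hk
      rw [hLdef, List.getD_append _ _ _ k (by rw [pairList_length]; omega)]
      exact pairList_getD _ _ p k hk
    have hgetA : L.getD (2 * p) 0 = e 2 := by
      rw [hLdef, List.getD_append_right _ _ _ _ (by rw [pairList_length])]
      simp [pairList_length]
    have hgetB : L.getD (2 * p + 1) 0 = e i := by
      rw [hLdef, List.getD_append_right _ _ _ _ (by rw [pairList_length]; omega)]
      simp [pairList_length]
    have hcons : pairList (e 1) (e 2) (p + 1) ++ [e 2, e i] = e 1 :: e 2 :: L := by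
      simp [pairList, hLdef]
    rw [hcons, Rpow_succ, RAct_cons, hLlen]
    have t_odd : ∀ k, k < 2 * p → k % 2 = 1 →
        Rpow h S ω p (L.set k (RR h S (e 1) (e 2) (L.getD k 0)))
          = ε * Rpow h S ω p L := by
      intro k hk hk2
      have hg : L.getD k 0 = e 2 := by rw [hgetL k hk, if_neg (by omega)]
      rw [hg, hR2, Rpow_set_smul h S ω p L hLlen k (by omega) ε (e 2),
        show L.set k (e 2) = L from by rw [← hg]; exact set_getD_self' L k]
    have t_even : ∀ k, k < 2 * p → k % 2 = 0 →
        Rpow h S ω p (L.set k (RR h S (e 1) (e 2) (L.getD k 0))) = 0 := by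
      intro k hk hk2
      rw [hgetL k hk, if_pos hk2, hR1]
      exact Rpow_set_zero h S ω p L hLlen k (by omega)
    have t_mid : Rpow h S ω p (L.set (2 * p) (RR h S (e 1) (e 2) (L.getD (2 * p) 0)))
        = ε * Rpow h S ω p L := by
      rw [hgetA, hR2, Rpow_set_smul h S ω p L hLlen (2 * p) (by omega) ε (e 2),
        show L.set (2 * p) (e 2) = L from by rw [← hgetA]; exact set_getD_self' L (2 * p)]
    have t_last : Rpow h S ω p (L.set (2 * p + 1) (RR h S (e 1) (e 2) (L.getD (2 * p + 1) 0)))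
        = 0 := by
      rw [hgetB, hRi, Rpow_set_smul h S ω p L hLlen (2 * p + 1) (by omega) _ (e 2)]
      by_cases hi2 : i = 2
      · rw [show L.set (2 * p + 1) (e 2) = L from by
            rw [← show L.getD (2 * p + 1) 0 = e 2 from by rw [hgetB, hi2]]
            exact set_getD_self' L (2 * p + 1),
          IH, hi2, halt]
        ring
      · rw [hE hi2]; ring
    have hsum : ∑ k ∈ Finset.range (2 * p),
        Rpow h S ω p (L.set k (RR h S (e 1) (e 2) (L.getD k 0)))
        = p * (ε * Rpow h S ω p L) := by
      rw [← sum_if_odd (ε * Rpow h S ω p L) p]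
      apply Finset.sum_congr rfl
      intro k hk
      have hk' : k < 2 * p := Finset.mem_range.mp hk
      by_cases h2 : k % 2 = 1
      · rw [if_pos h2]; exact t_odd k hk' h2
      · rw [if_neg h2]; exact t_even k hk' (by omega)
    rw [show 2 * p + 2 = (2 * p + 1) + 1 by omega, Finset.sum_range_succ,
      Finset.sum_range_succ, hsum, t_mid, t_last, IH, Nat.factorial_succ]
    push_cast
    ring
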